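/- Let φ : 𝔽₂[ξ₁, ξ₂, ξ₃, …] → 𝔽₂[χ₁, χ₂, χ₃, …]((z)) be the unique 𝔽₂-algebra homomorphism determined by φ(ξᵢ) = χᵢ·z^{2^i − 1} + χ_{i−1}·z^{−1} for all i ≥ 1, where by convention χ₀ = 1. Then φ is injective. -/

import Mathlib

/-!
STATEMENT 0: The gluing map `φ : 𝔽₂[ξ₁, ξ₂, …] → 𝔽₂[χ₁, χ₂, …]((z))` determined by
`φ(ξᵢ) = χᵢ·z^{2^i − 1} + χ_{i−1}·z^{−1}` (with `χ₀ = 1`) is injective.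

Here the variable `X i` of `MvPolynomial ℕ (ZMod 2)` stands for `ξ_{i+1}` (resp. `χ_{i+1}`),
`LaurentSeries R = HahnSeries ℤ R` is the ring of formal Laurent series, and
`HahnSeries.single n c` is the Laurent series `c·zⁿ`.
-/

open MvPolynomial

noncomputable section

/-- `chi 0 = 1` (the convention `χ₀ = 1`) and `chi (i+1)` is the variable `χ_{i+1}`. -/
def chi : ℕ → MvPolynomial ℕ (ZMod 2)
  | 0 => 1
  | i + 1 => X i

namespace Stmt0Aux

abbrev R2 : Type := MvPolynomial ℕ (ZMod 2)

lemma chi_ne_zero (i : ℕ) : chi i ≠ 0 := by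
  cases i with
  | zero => simp [chi]
  | succ n => simpa [chi] using MvPolynomial.X_ne_zero (R := ZMod 2) (σ := ℕ) n

/-- The shift of a finsupp: `(shift s) j = s (j+1)`. -/
def shift (s : ℕ →₀ ℕ) : ℕ →₀ ℕ :=
  Finsupp.comapDomain Nat.succ s (fun _ _ _ _ h => Nat.succ_injective h)

@[simp] lemma shift_apply (s : ℕ →₀ ℕ) (j : ℕ) : shift s j = s (j + 1) := rfl

lemma shift_add (s t : ℕ →₀ ℕ) : shift (s + t) = shift s + shift t := by
  ext j; simp

@[simp] lemma shift_zero : shift 0 = 0 := by ext j; simp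

/-- The total degree of an exponent finsupp. -/
def deg (s : ℕ →₀ ℕ) : ℕ := s.sum fun _ e => e

@[simp] lemma deg_zero : deg 0 = 0 := by simp [deg]

lemma deg_single (a b : ℕ) : deg (Finsupp.single a b) = b := by
  simp [deg, Finsupp.sum_single_index]

lemma deg_add (s t : ℕ →₀ ℕ) : deg (s + t) = deg s + deg t := by
  simp [deg, Finsupp.sum_add_index']

lemma shift_single_succ (n b : ℕ) :
    shift (Finsupp.single (n + 1) b) = Finsupp.single n b := by
  ext j
  simp [Finsupp.single_apply]

lemma shift_single_zero (b : ℕ) : shift (Finsupp.single 0 b) = 0 := by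
  ext j
  simp [Finsupp.single_apply]

lemma deg_eq (s : ℕ →₀ ℕ) : deg s = s 0 + deg (shift s) := by
  induction s using Finsupp.induction with
  | zero => simp
  | single_add a b f ha hb ih =>
    rw [deg_add, shift_add, deg_add, ih]
    cases a with
    | zero => simp [shift_single_zero, deg_single]; ring
    | succ n => simp [shift_single_succ, deg_single]; ring

lemma shift_inj {s t : ℕ →₀ ℕ} (hd : deg s = deg t) (hs : shift s = shift t) :
    s = t := by
  ext i
  cases i with
  | zero =>
    have h1 := deg_eq s
    have h2 := deg_eq t
    rw [hs, hd] at h1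
    omega
  | succ j =>
    have := congrArg (fun u => u j) hs
    simpa using this

lemma leadingCoeff_mul {x y : LaurentSeries R2} (hx : x ≠ 0) (hy : y ≠ 0) :
    (x * y).leadingCoeff = x.leadingCoeff * y.leadingCoeff := by
  rw [HahnSeries.leadingCoeff_eq, HahnSeries.order_mul hx hy,
    HahnSeries.coeff_mul_order_add_order x y]

lemma leadingCoeff_pow {x : LaurentSeries R2} (hx : x ≠ 0) (b : ℕ) :
    (x ^ b).leadingCoeff = x.leadingCoeff ^ b := by
  induction b with
  | zero => simp [HahnSeries.leadingCoeff_one]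
  | succ n ih => rw [pow_succ, leadingCoeff_mul (pow_ne_zero _ hx) hx, ih, pow_succ]

lemma chi_pow_eq (a b : ℕ) :
    chi a ^ b = monomial (shift (Finsupp.single a b)) (1 : ZMod 2) := by
  cases a with
  | zero => simp [chi, shift_single_zero]
  | succ n => rw [chi, shift_single_succ, X_pow_eq_monomial]

lemma hahn_coeff_sum {α : Type*} (s : Finset α) (f : α → LaurentSeries R2) (n : ℤ) :
    (∑ i ∈ s, f i).coeff n = ∑ i ∈ s, (f i).coeff n := by
  classical
  induction s using Finset.induction_on with
  | empty => simp
  | insert _ _ h ih => rw [Finset.sum_insert h, Finset.sum_insert h, HahnSeries.coeff_add, ih]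

section Phi

variable (φ : MvPolynomial ℕ (ZMod 2) →ₐ[ZMod 2] LaurentSeries (MvPolynomial ℕ (ZMod 2)))
  (hφ : ∀ i : ℕ, φ (X i) =
      HahnSeries.single ((2 ^ (i + 1) : ℤ) - 1) (chi (i + 1)) +
        HahnSeries.single (-1 : ℤ) (chi i))

include hφ

lemma orderTop_phi_X (a : ℕ) : (φ (X a)).orderTop = ((-1 : ℤ) : WithTop ℤ) := by
  rw [hφ a]
  rw [HahnSeries.orderTop_add_eq_right]
  · exact HahnSeries.orderTop_single (chi_ne_zero a)
  · rw [HahnSeries.orderTop_single (chi_ne_zero a),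
      HahnSeries.orderTop_single (chi_ne_zero (a + 1))]
    have h2 : (0 : ℤ) < 2 ^ (a + 1) := by positivity
    have : (-1 : ℤ) < 2 ^ (a + 1) - 1 := by linarith
    exact_mod_cast this

lemma phi_X_ne_zero (a : ℕ) : φ (X a) ≠ 0 := by
  intro h
  have := orderTop_phi_X φ hφ a
  rw [h, HahnSeries.orderTop_zero] at this
  exact (WithTop.top_ne_coe) this

lemma order_phi_X (a : ℕ) : (φ (X a)).order = -1 := by
  have h := HahnSeries.order_eq_orderTop_of_ne_zero (phi_X_ne_zero φ hφ a)
  rw [orderTop_phi_X φ hφ a] at h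
  exact WithTop.coe_eq_coe.mp h

lemma leadingCoeff_phi_X (a : ℕ) : (φ (X a)).leadingCoeff = chi a := by
  rw [hφ a]
  rw [HahnSeries.leadingCoeff_add_eq_right]
  · exact HahnSeries.leadingCoeff_of_single
  · rw [HahnSeries.orderTop_single (chi_ne_zero a),
      HahnSeries.orderTop_single (chi_ne_zero (a + 1))]
    have h2 : (0 : ℤ) < 2 ^ (a + 1) := by positivity
    have : (-1 : ℤ) < 2 ^ (a + 1) - 1 := by linarith
    exact_mod_cast this

lemma key (s : ℕ →₀ ℕ) :
    φ (monomial s 1) ≠ 0 ∧ (φ (monomial s 1)).order = -(deg s : ℤ) ∧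
      (φ (monomial s 1)).leadingCoeff = monomial (shift s) 1 := by
  induction s using Finsupp.induction with
  | zero =>
    have h1 : (monomial (0 : ℕ →₀ ℕ) (1 : ZMod 2)) = 1 := by
      simp
    rw [h1, map_one]
    refine ⟨one_ne_zero, ?_, ?_⟩
    · simp [HahnSeries.order_one]
    · simp [HahnSeries.leadingCoeff_one]
  | single_add a b f ha hb ih =>
    obtain ⟨ihne, ihord, ihlc⟩ := ih
    have hsplit : (monomial (Finsupp.single a b + f) (1 : ZMod 2)) =
        X a ^ b * monomial f 1 := by
      rw [X_pow_eq_monomial, monomial_mul, one_mul]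
    have hXb : φ (X a ^ b) = φ (X a) ^ b := map_pow φ _ _
    have hXne : φ (X a) ^ b ≠ 0 := pow_ne_zero _ (phi_X_ne_zero φ hφ a)
    have hne : φ (monomial (Finsupp.single a b + f) 1) ≠ 0 := by
      rw [hsplit, map_mul, hXb]
      exact mul_ne_zero hXne ihne
    refine ⟨hne, ?_, ?_⟩
    · rw [hsplit, map_mul, hXb, HahnSeries.order_mul hXne ihne,
        HahnSeries.order_pow, order_phi_X φ hφ a, ihord, deg_add, deg_single]
      push_cast
      ring
    · rw [hsplit, map_mul, hXb, leadingCoeff_mul hXne ihne,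
        leadingCoeff_pow (phi_X_ne_zero φ hφ a), leadingCoeff_phi_X φ hφ a,
        ihlc, chi_pow_eq, monomial_mul, one_mul, shift_add]

end Phi

end Stmt0Aux

open Stmt0Aux

theorem stmt_0
    (φ : MvPolynomial ℕ (ZMod 2) →ₐ[ZMod 2] LaurentSeries (MvPolynomial ℕ (ZMod 2)))
    (hφ : ∀ i : ℕ, φ (X i) =
      HahnSeries.single ((2 ^ (i + 1) : ℤ) - 1) (chi (i + 1)) +
        HahnSeries.single (-1 : ℤ) (chi i)) :
    Function.Injective φ := by
  rw [injective_iff_map_eq_zero]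
  intro p hp
  by_contra hne
  -- the maximal monomial degree is attained at some `s₀` in the support
  have hsupp : p.support.Nonempty := support_nonempty.mpr hne
  obtain ⟨s₀, hs₀mem, hs₀⟩ := Finset.exists_mem_eq_sup p.support hsupp (fun s => deg s)
  set m := deg s₀ with hm
  have hle : ∀ s ∈ p.support, deg s ≤ m := fun s hs => hs₀ ▸ Finset.le_sup hs
  -- all coefficients of `p` on its support are 1
  have hcoeff1 : ∀ s ∈ p.support, coeff s p = 1 := by
    intro s hs
    have h : coeff s p ≠ 0 := mem_support_iff.mp hs
    revert h
    generalize coeff s p = x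
    revert x
    decide
  have hpsum : p = ∑ s ∈ p.support, monomial s 1 := by
    conv_lhs => rw [← support_sum_monomial_coeff p]
    exact Finset.sum_congr rfl fun s hs => by rw [hcoeff1 s hs]
  -- compute the coefficient of `φ p` at `-m`
  have hc0 : (φ p).coeff (-(m : ℤ)) = 0 := by rw [hp, HahnSeries.coeff_zero]
  have hcsum : (φ p).coeff (-(m : ℤ)) =
      ∑ s ∈ p.support, (φ (monomial s 1)).coeff (-(m : ℤ)) := by
    conv_lhs => rw [hpsum, map_sum]
    exact hahn_coeff_sum _ _ _
  have hterm : ∀ s ∈ p.support, (φ (monomial s 1)).coeff (-(m : ℤ)) =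
      if deg s = m then monomial (shift s) 1 else 0 := by
    intro s hs
    obtain ⟨hne', hord, hlc⟩ := key φ hφ s
    by_cases hd : deg s = m
    · rw [if_pos hd]
      have : (-(m : ℤ)) = (φ (monomial s 1)).order := by rw [hord, hd]
      rw [this, ← HahnSeries.leadingCoeff_eq, hlc]
    · rw [if_neg hd]
      have hlt : deg s < m := lt_of_le_of_ne (hle s hs) hd
      apply HahnSeries.coeff_eq_zero_of_lt_order
      rw [hord]
      omega
  have hsum0 : (0 : R2) =
      ∑ s ∈ p.support.filter (fun s => deg s = m), monomial (shift s) 1 := by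
    rw [Finset.sum_filter, ← Finset.sum_congr rfl hterm, ← hcsum, hc0]
  -- evaluate the coefficient at the monomial `shift s₀`
  have := congrArg (coeff (shift s₀)) hsum0
  rw [coeff_zero, coeff_sum] at this
  have hconv : ∀ s ∈ p.support.filter (fun s => deg s = m),
      coeff (shift s₀) (monomial (shift s) (1 : ZMod 2)) =
        if s = s₀ then 1 else 0 := by
    intro s hs
    rw [Finset.mem_filter] at hs
    by_cases h : s = s₀
    · subst h; simp [coeff_monomial]
    · rw [coeff_monomial, if_neg (fun hsh => h (shift_inj (by rw [hs.2, hm]) hsh)), if_neg h]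
  rw [Finset.sum_congr rfl hconv, Finset.sum_ite_eq', if_pos (by
      rw [Finset.mem_filter]; exact ⟨hs₀mem, rfl⟩)] at this
  exact one_ne_zero this.symm

end
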